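/- arXiv:1404.6853 — 3 statements merged into one kernel-verified Lean document; each statement's English description precedes it below -/
import Mathlib

section
/- Let x₁, x₂ ∈ ℝⁿ and positive reals t₁, t₂, α, η satisfy t₁ ≥ α > η, ‖x₁‖² + t₁² = 1, ‖x₂‖² + t₂² ≤ 1, and ‖x₁ - x₂‖² + (t₁ - t₂)² ≤ η². Then ‖x₁/t₁ - x₂/t₂‖² ≤ 4η² / (α²(α - η)²). -/
theorem stmt_0 {n : ℕ} (x₁ x₂ : EuclideanSpace ℝ (Fin n)) (t₁ t₂ α η : ℝ)
    (ht₁ : 0 < t₁) (ht₂ : 0 < t₂) (hα : 0 < α) (hη : 0 < η)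
    (hαt : α ≤ t₁) (hηα : η < α)
    (h1 : ‖x₁‖ ^ 2 + t₁ ^ 2 = 1) (h2 : ‖x₂‖ ^ 2 + t₂ ^ 2 ≤ 1)
    (h3 : ‖x₁ - x₂‖ ^ 2 + (t₁ - t₂) ^ 2 ≤ η ^ 2) :
    ‖t₁⁻¹ • x₁ - t₂⁻¹ • x₂‖ ^ 2 ≤ 4 * η ^ 2 / (α ^ 2 * (α - η) ^ 2) := by
  have hαη : 0 < α - η := by linarith
  -- t₁ ≤ 1
  have ht1le : t₁ ≤ 1 := by
    nlinarith [sq_nonneg (‖x₁‖), sq_nonneg (t₁ - 1)]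
  -- ‖x₂‖ ≤ 1
  have hx2 : ‖x₂‖ ≤ 1 := by
    nlinarith [sq_nonneg t₂, norm_nonneg x₂, sq_nonneg (‖x₂‖ - 1)]
  -- ‖x₁ - x₂‖ ≤ η
  have hd : ‖x₁ - x₂‖ ≤ η := by
    nlinarith [sq_nonneg (t₁ - t₂), norm_nonneg (x₁ - x₂), sq_nonneg (‖x₁ - x₂‖ - η)]
  -- |t₁ - t₂| ≤ η
  have htd : |t₁ - t₂| ≤ η := by
    rw [abs_le]
    constructor <;> nlinarith [norm_nonneg (x₁ - x₂), sq_nonneg (‖x₁ - x₂‖)]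
  have ht2ge : α - η ≤ t₂ := by
    rcases abs_le.mp htd with ⟨h, h'⟩; linarith
  -- triangle inequality
  have hsplit : t₁⁻¹ • x₁ - t₂⁻¹ • x₂ = t₁⁻¹ • (x₁ - x₂) + (t₁⁻¹ - t₂⁻¹) • x₂ := by
    rw [smul_sub, sub_smul]; abel
  have hnorm : ‖t₁⁻¹ • x₁ - t₂⁻¹ • x₂‖ ≤ t₁⁻¹ * ‖x₁ - x₂‖ + |t₁⁻¹ - t₂⁻¹| * ‖x₂‖ := by
    rw [hsplit]
    calc ‖t₁⁻¹ • (x₁ - x₂) + (t₁⁻¹ - t₂⁻¹) • x₂‖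
        ≤ ‖t₁⁻¹ • (x₁ - x₂)‖ + ‖(t₁⁻¹ - t₂⁻¹) • x₂‖ := norm_add_le _ _
      _ = t₁⁻¹ * ‖x₁ - x₂‖ + |t₁⁻¹ - t₂⁻¹| * ‖x₂‖ := by
          rw [norm_smul, norm_smul, Real.norm_eq_abs, Real.norm_eq_abs,
            abs_of_pos (inv_pos.mpr ht₁)]
  have hinvdiff : |t₁⁻¹ - t₂⁻¹| = |t₂ - t₁| / (t₁ * t₂) := by
    have h : t₁⁻¹ - t₂⁻¹ = (t₂ - t₁) / (t₁ * t₂) := by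
      field_simp
    rw [h, abs_div, abs_of_pos (mul_pos ht₁ ht₂)]
  have key : ‖t₁⁻¹ • x₁ - t₂⁻¹ • x₂‖ ≤ 2 * η / (α * (α - η)) := by
    have h5 : |t₂ - t₁| ≤ η := by rwa [abs_sub_comm]
    have b1 : t₁⁻¹ * ‖x₁ - x₂‖ ≤ η / α := by
      have : t₁⁻¹ ≤ α⁻¹ := by gcongr
      calc t₁⁻¹ * ‖x₁ - x₂‖ ≤ α⁻¹ * η := by
            apply mul_le_mul this hd (norm_nonneg _) (le_of_lt (inv_pos.mpr hα))
        _ = η / α := by rw [inv_mul_eq_div]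
    have b2 : |t₁⁻¹ - t₂⁻¹| * ‖x₂‖ ≤ η / (α * (α - η)) := by
      rw [hinvdiff]
      have hαle : α * (α - η) ≤ t₁ * t₂ := by
        exact mul_le_mul hαt ht2ge hαη.le ht₁.le
      calc |t₂ - t₁| / (t₁ * t₂) * ‖x₂‖ ≤ |t₂ - t₁| / (t₁ * t₂) * 1 := by
            apply mul_le_mul_of_nonneg_left hx2
            positivity
        _ = |t₂ - t₁| / (t₁ * t₂) := mul_one _
        _ ≤ η / (α * (α - η)) := by
            apply div_le_div₀ (le_of_lt hη) h5 (by positivity) hαle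
    have hα1 : α - η ≤ 1 := by linarith
    calc ‖t₁⁻¹ • x₁ - t₂⁻¹ • x₂‖ ≤ t₁⁻¹ * ‖x₁ - x₂‖ + |t₁⁻¹ - t₂⁻¹| * ‖x₂‖ := hnorm
      _ ≤ η / α + η / (α * (α - η)) := add_le_add b1 b2
      _ ≤ 2 * η / (α * (α - η)) := by
          rw [div_add_div _ _ (ne_of_gt hα) (by positivity), div_le_div_iff₀ (by positivity) (by positivity)]
          nlinarith [mul_nonneg (mul_nonneg (mul_nonneg hη.le hα.le) hαη.le) (by linarith : (0:ℝ) ≤ 1 - (α - η)), mul_pos hα hαη]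
  calc ‖t₁⁻¹ • x₁ - t₂⁻¹ • x₂‖ ^ 2 ≤ (2 * η / (α * (α - η))) ^ 2 := by
        apply pow_le_pow_left₀ (norm_nonneg _) key
    _ = 4 * η ^ 2 / (α ^ 2 * (α - η) ^ 2) := by
        field_simp
        ring
end

section
/- Let h(u) = 1/erf⁻¹(2u - 1) on (1/2, 1). Then h'(u) = -√π exp((erf⁻¹(2u-1))²) / (erf⁻¹(2u-1))², and |h'| is decreasing on the interval (1/2, (erf(1)+1)/2). -/
/-- The Gaussian error function. -/
noncomputable def erf (x : ℝ) : ℝ :=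
  (2 / Real.sqrt Real.pi) * ∫ t in (0:ℝ)..x, Real.exp (-t ^ 2)

/-- The inverse of the Gaussian error function. -/
noncomputable def erfinv : ℝ → ℝ := Function.invFun erf

noncomputable def h (u : ℝ) : ℝ := 1 / erfinv (2 * u - 1)

/-- The claimed derivative of `h`. -/
noncomputable def h' (u : ℝ) : ℝ :=
  -Real.sqrt Real.pi * Real.exp ((erfinv (2 * u - 1)) ^ 2) / (erfinv (2 * u - 1)) ^ 2

open Real Set Filter MeasureTheory Topology

lemma cont_integrand : Continuous fun t : ℝ => Real.exp (-t ^ 2) :=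
  Real.continuous_exp.comp (continuous_pow 2).neg

lemma erf_hasDerivAt (x : ℝ) :
    HasDerivAt erf (2 / Real.sqrt Real.pi * Real.exp (-x ^ 2)) x := by
  have h := (cont_integrand.integral_hasStrictDerivAt 0 x).hasDerivAt
  exact h.const_mul (2 / Real.sqrt Real.pi)

lemma sqrt_pi_pos : 0 < Real.sqrt Real.pi := Real.sqrt_pos.mpr Real.pi_pos

lemma erf_strictMono : StrictMono erf := by
  apply strictMono_of_deriv_pos
  intro x
  rw [(erf_hasDerivAt x).deriv]
  positivity

lemma erf_zero : erf 0 = 0 := by simp [erf]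

lemma tendsto_erf_atTop : Tendsto erf atTop (𝓝 1) := by
  have hint : IntegrableOn (fun t : ℝ => Real.exp (-t ^ 2)) (Ioi 0) := by
    have := (integrable_exp_neg_mul_sq (one_pos)).integrableOn (s := Ioi (0:ℝ))
    simpa using this
  have h := MeasureTheory.intervalIntegral_tendsto_integral_Ioi 0 hint tendsto_id
  have hval : ∫ x in Ioi (0:ℝ), Real.exp (-x ^ 2) = Real.sqrt Real.pi / 2 := by
    simpa using integral_gaussian_Ioi 1
  rw [hval] at h
  have h2 := h.const_mul (2 / Real.sqrt Real.pi)
  have : 2 / Real.sqrt Real.pi * (Real.sqrt Real.pi / 2) = 1 := by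
    field_simp
  rw [this] at h2
  unfold erf
  simpa using h2

lemma erf_lt_one (x : ℝ) : erf x < 1 := by
  have h1 : erf x < erf (x + 1) := erf_strictMono (lt_add_one x)
  have h2 : erf (x + 1) ≤ 1 :=
    ge_of_tendsto tendsto_erf_atTop
      (eventually_atTop.2 ⟨x + 1, fun z hz => erf_strictMono.monotone hz⟩)
  linarith

lemma range_subset : Ioo (0:ℝ) 1 ⊆ Set.range erf := by
  intro y hy
  obtain ⟨b, hb⟩ := (tendsto_erf_atTop.eventually (eventually_gt_nhds hy.2)).exists
  have hb0 : (0:ℝ) ≤ b := by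
    by_contra hc
    have := erf_strictMono (show b < 0 by linarith)
    rw [erf_zero] at this
    exact absurd hb (by linarith [hy.1])
  have hcont : Continuous erf := by
    have : Differentiable ℝ erf := fun x => (erf_hasDerivAt x).differentiableAt
    exact this.continuous
  have hsub := intermediate_value_Icc hb0 hcont.continuousOn
  have hmem : y ∈ Icc (erf 0) (erf b) := by
    rw [erf_zero]
    exact ⟨hy.1.le, hb.le⟩
  obtain ⟨c, _, hc⟩ := hsub hmem
  exact ⟨c, hc⟩

lemma erf_erfinv {y : ℝ} (hy : y ∈ Ioo (0:ℝ) 1) : erf (erfinv y) = y :=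
  Function.invFun_eq (range_subset hy)

lemma erfinv_pos {y : ℝ} (hy : y ∈ Ioo (0:ℝ) 1) : 0 < erfinv y := by
  have := erf_erfinv hy
  have h0 : erf 0 < erf (erfinv y) := by rw [erf_zero, this]; exact hy.1
  exact erf_strictMono.lt_iff_lt.mp h0

lemma erfinv_continuousAt {y : ℝ} (hy : y ∈ Ioo (0:ℝ) 1) : ContinuousAt erfinv y := by
  rw [ContinuousAt, tendsto_order]
  constructor
  · intro a ha
    have h1 : erf a < y := by
      rw [← erf_erfinv hy]; exact erf_strictMono ha
    filter_upwards [eventually_gt_nhds h1, Ioo_mem_nhds hy.1 hy.2] with z hz hz'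
    have h2 : erf a < erf (erfinv z) := by rw [erf_erfinv hz']; exact hz
    exact erf_strictMono.lt_iff_lt.mp h2
  · intro b hb
    have h1 : y < erf b := by
      rw [← erf_erfinv hy]; exact erf_strictMono hb
    filter_upwards [eventually_lt_nhds h1, Ioo_mem_nhds hy.1 hy.2] with z hz hz'
    have h2 : erf (erfinv z) < erf b := by rw [erf_erfinv hz']; exact hz
    exact erf_strictMono.lt_iff_lt.mp h2

lemma erfinv_hasDerivAt {y : ℝ} (hy : y ∈ Ioo (0:ℝ) 1) :
    HasDerivAt erfinv (Real.sqrt Real.pi / 2 * Real.exp ((erfinv y) ^ 2)) y := by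
  set x := erfinv y with hx
  have hne : 2 / Real.sqrt Real.pi * Real.exp (-x ^ 2) ≠ 0 := by positivity
  have hfg : ∀ᶠ z in 𝓝 y, erf (erfinv z) = z := by
    filter_upwards [Ioo_mem_nhds hy.1 hy.2] with z hz
    exact erf_erfinv hz
  have hd := HasDerivAt.of_local_left_inverse (erfinv_continuousAt hy)
    (erf_hasDerivAt x) hne hfg
  have hv : Real.sqrt Real.pi / 2 * Real.exp ((erfinv y) ^ 2)
      = (2 / Real.sqrt Real.pi * Real.exp (-x ^ 2))⁻¹ := by
    rw [Real.exp_neg]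
    field_simp
    rfl
  rw [hv]
  exact hd

lemma h_hasDerivAt {u : ℝ} (hu : u ∈ Ioo (1/2 : ℝ) 1) : HasDerivAt h (h' u) u := by
  have hy : 2 * u - 1 ∈ Ioo (0:ℝ) 1 := ⟨by linarith [hu.1], by linarith [hu.2]⟩
  set x := erfinv (2 * u - 1) with hxdef
  have hx0 : 0 < x := erfinv_pos hy
  have hlin : HasDerivAt (fun u : ℝ => 2 * u - 1) 2 u := by
    simpa using ((hasDerivAt_id u).const_mul 2).sub_const 1
  have h1 := (erfinv_hasDerivAt hy).comp u hlin
  have h2 := h1.inv (ne_of_gt hx0)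
  have heq : h = fun u => (erfinv (2 * u - 1))⁻¹ := by
    funext v; simp [h, one_div]
  rw [heq]
  refine h2.congr_deriv (Eq.symm ?_)
  show h' u = -(Real.sqrt Real.pi / 2 * Real.exp (x ^ 2) * 2) / x ^ 2
  simp only [h', ← hxdef]
  ring

lemma g_antitoneOn :
    AntitoneOn (fun x : ℝ => Real.sqrt Real.pi * Real.exp (x ^ 2) / x ^ 2) (Ioo (0:ℝ) 1) := by
  have hderiv : ∀ x ∈ Ioo (0:ℝ) 1,
      HasDerivAt (fun x : ℝ => Real.sqrt Real.pi * Real.exp (x ^ 2) / x ^ 2)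
        ((Real.sqrt Real.pi * (Real.exp (x ^ 2) * (2 * x)) * x ^ 2 -
          Real.sqrt Real.pi * Real.exp (x ^ 2) * (2 * x)) / (x ^ 2) ^ 2) x := by
    intro x hx
    have hx2 : x ^ 2 ≠ 0 := pow_ne_zero 2 (ne_of_gt hx.1)
    have hnum : HasDerivAt (fun x : ℝ => Real.sqrt Real.pi * Real.exp (x ^ 2))
        (Real.sqrt Real.pi * (Real.exp (x ^ 2) * (2 * x))) x := by
      have hsq : HasDerivAt (fun x : ℝ => x ^ 2) (2 * x) x := by
        simpa using hasDerivAt_pow 2 x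
      exact (hsq.exp).const_mul _
    have hden : HasDerivAt (fun x : ℝ => x ^ 2) (2 * x) x := by
      simpa using hasDerivAt_pow 2 x
    exact hnum.div hden hx2
  apply StrictAntiOn.antitoneOn
  apply strictAntiOn_of_deriv_neg (convex_Ioo 0 1)
  · intro x hx
    exact (hderiv x hx).differentiableAt.continuousAt.continuousWithinAt
  · intro x hx
    rw [interior_Ioo] at hx
    rw [(hderiv x hx).deriv]
    apply div_neg_of_neg_of_pos
    · have h1 : 0 < Real.sqrt Real.pi * Real.exp (x ^ 2) * (2 * x) :=
        mul_pos (mul_pos sqrt_pi_pos (Real.exp_pos _)) (by linarith [hx.1])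
      have h2 : x ^ 2 < 1 := by nlinarith [hx.1, hx.2]
      nlinarith
    · exact pow_pos (pow_pos hx.1 2) 2

theorem stmt_5 :
    (∀ u ∈ Set.Ioo (1 / 2 : ℝ) 1, HasDerivAt h (h' u) u) ∧
      AntitoneOn (fun u => |h' u|) (Set.Ioo (1 / 2 : ℝ) ((erf 1 + 1) / 2)) := by
  constructor
  · exact fun u hu => h_hasDerivAt hu
  · intro u₁ hu₁ u₂ hu₂ hle
    have he1 : erf 1 < 1 := erf_lt_one 1
    have hy₁ : 2 * u₁ - 1 ∈ Ioo (0:ℝ) 1 := ⟨by linarith [hu₁.1], by linarith [hu₁.2]⟩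
    have hy₂ : 2 * u₂ - 1 ∈ Ioo (0:ℝ) 1 := ⟨by linarith [hu₂.1], by linarith [hu₂.2]⟩
    set x₁ := erfinv (2 * u₁ - 1) with hx1
    set x₂ := erfinv (2 * u₂ - 1) with hx2
    have hx₁ : x₁ ∈ Ioo (0:ℝ) 1 := by
      refine ⟨erfinv_pos hy₁, ?_⟩
      have : erf x₁ < erf 1 := by
        rw [erf_erfinv hy₁]; linarith [hu₁.2]
      exact erf_strictMono.lt_iff_lt.mp this
    have hx₂ : x₂ ∈ Ioo (0:ℝ) 1 := by
      refine ⟨erfinv_pos hy₂, ?_⟩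
      have : erf x₂ < erf 1 := by
        rw [erf_erfinv hy₂]; linarith [hu₂.2]
      exact erf_strictMono.lt_iff_lt.mp this
    have hxle : x₁ ≤ x₂ := by
      have : erf x₁ ≤ erf x₂ := by
        rw [erf_erfinv hy₁, erf_erfinv hy₂]; linarith
      exact erf_strictMono.le_iff_le.mp this
    have habs : ∀ v : ℝ, 0 < erfinv (2 * v - 1) →
        |h' v| = Real.sqrt Real.pi * Real.exp ((erfinv (2 * v - 1)) ^ 2) /
          (erfinv (2 * v - 1)) ^ 2 := by
      intro v hv
      rw [h', abs_div, abs_mul, abs_neg, abs_of_nonneg (Real.sqrt_nonneg _),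
        abs_of_pos (Real.exp_pos _), abs_of_pos (by positivity : (0:ℝ) < (erfinv (2*v-1))^2)]
    simp only [habs u₁ hx₁.1, habs u₂ hx₂.1]
    exact g_antitoneOn hx₁ hx₂ hxle
end

section
/- Fix 0 < δ < 1/5 and 0 < r ≤ R, and set τ = r. Suppose F = (1/2)(1 + erf(τ/(σ√2))) for some σ ∈ [r, R], and suppose F_m is a real number with |F - F_m| ≤ (1/2)(erf(r/(√2R)) - erf((1-δ)r/(√2R))). Then both F and F_m lie in the interval [(1/2)(1 + erf((1-δ)r/(√2 R))), (1/2)(1 + erf(1))]. -/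
lemma gauss_integrable (a b : ℝ) :
    IntervalIntegrable (fun t => Real.exp (-t ^ 2)) MeasureTheory.volume a b :=
  (Real.continuous_exp.comp (by continuity)).intervalIntegrable a b

lemma erf_sub (a b : ℝ) :
    erf b - erf a = (2 / Real.sqrt Real.pi) * ∫ t in a..b, Real.exp (-t ^ 2) := by
  unfold erf
  rw [← mul_sub, intervalIntegral.integral_interval_sub_left (gauss_integrable 0 b)
    (gauss_integrable 0 a)]

lemma erf_mono {a b : ℝ} (h : a ≤ b) : erf a ≤ erf b := by
  have h1 := erf_sub a b
  have h2 : (0:ℝ) ≤ 2 / Real.sqrt Real.pi := by positivity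
  have h3 : 0 ≤ ∫ t in a..b, Real.exp (-t ^ 2) :=
    intervalIntegral.integral_nonneg h fun t _ => (Real.exp_pos _).le
  nlinarith [mul_nonneg h2 h3]

lemma exp_upper {t : ℝ} : Real.exp (-t ^ 2) ≤ 1 - t ^ 2 + t ^ 4 := by
  have h1 := Real.add_one_le_exp (t ^ 2)
  have h2 : Real.exp (-t ^ 2) * Real.exp (t ^ 2) = 1 := by
    rw [← Real.exp_add]; simp
  have h3 := Real.exp_pos (-t ^ 2)
  nlinarith [sq_nonneg t, sq_nonneg (t ^ 2), sq_nonneg (t ^ 3)]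

lemma exp_lower {t : ℝ} (ht : 0 ≤ t) (ht1 : t ≤ 1) :
    1 - t ^ 2 + t ^ 4 / 2 - t ^ 6 / 6 - 5 * t ^ 8 / 96 ≤ Real.exp (-t ^ 2) := by
  have habs : |(-t ^ 2 : ℝ)| ≤ 1 := by
    rw [abs_neg, abs_of_nonneg (by positivity)]; nlinarith
  have h := Real.exp_bound habs (n := 4) (by norm_num)
  rw [abs_le] at h
  have hsum : ∑ m ∈ Finset.range 4, (-t ^ 2) ^ m / m.factorial
      = 1 - t ^ 2 + t ^ 4 / 2 - t ^ 6 / 6 := by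
    simp [Finset.sum_range_succ, Nat.factorial]
    ring
  have habs2 : |(-t ^ 2 : ℝ)| ^ 4 = t ^ 8 := by
    rw [abs_neg, abs_of_nonneg (by positivity)]; ring
  rw [hsum, habs2] at h
  have h2 := h.1
  norm_num [Nat.factorial] at h2
  linarith

lemma poly1_integral (a b : ℝ) :
    (∫ t in a..b, (1 - t ^ 2 + t ^ 4)) =
      (b - b ^ 3 / 3 + b ^ 5 / 5) - (a - a ^ 3 / 3 + a ^ 5 / 5) := by
  have hd : ∀ t : ℝ, HasDerivAt (fun t : ℝ => t - t ^ 3 / 3 + t ^ 5 / 5)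
      (1 - t ^ 2 + t ^ 4) t := by
    intro t
    have h := ((hasDerivAt_id t).sub ((hasDerivAt_pow 3 t).div_const 3)).add
      ((hasDerivAt_pow 5 t).div_const 5)
    refine h.congr_deriv ?_
    push_cast; ring
  exact intervalIntegral.integral_eq_sub_of_hasDerivAt (fun t _ => hd t)
    ((by continuity : Continuous fun t : ℝ => 1 - t ^ 2 + t ^ 4).intervalIntegrable a b)

lemma poly2_integral (a b : ℝ) :
    (∫ t in a..b, (1 - t ^ 2 + t ^ 4 / 2 - t ^ 6 / 6 - 5 * t ^ 8 / 96)) =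
      (b - b ^ 3 / 3 + b ^ 5 / 10 - b ^ 7 / 42 - 5 * b ^ 9 / 864)
        - (a - a ^ 3 / 3 + a ^ 5 / 10 - a ^ 7 / 42 - 5 * a ^ 9 / 864) := by
  have hd : ∀ t : ℝ, HasDerivAt
      (fun t : ℝ => t - t ^ 3 / 3 + t ^ 5 / 10 - t ^ 7 / 42 - 5 * t ^ 9 / 864)
      (1 - t ^ 2 + t ^ 4 / 2 - t ^ 6 / 6 - 5 * t ^ 8 / 96) t := by
    intro t
    have h := ((((hasDerivAt_id t).sub ((hasDerivAt_pow 3 t).div_const 3)).add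
      ((hasDerivAt_pow 5 t).div_const 10)).sub ((hasDerivAt_pow 7 t).div_const 42)).sub
      (((hasDerivAt_pow 9 t).const_mul 5).div_const 864)
    refine h.congr_deriv ?_
    push_cast; ring
  exact intervalIntegral.integral_eq_sub_of_hasDerivAt (fun t _ => hd t)
    ((by continuity :
      Continuous fun t : ℝ => 1 - t ^ 2 + t ^ 4 / 2 - t ^ 6 / 6 - 5 * t ^ 8 / 96).intervalIntegrable a b)

lemma step1 {δ x : ℝ} (hδ0 : 0 < δ) (hδ : δ ≤ 1 / 5) (hx : 0 < x) (hx2 : x ^ 2 ≤ 1 / 2) :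
    (x - x ^ 3 / 3 + x ^ 5 / 5) -
      ((1 - δ) * x - ((1 - δ) * x) ^ 3 / 3 + ((1 - δ) * x) ^ 5 / 5) ≤
      x / 5 - 61 * x ^ 3 / 375 + 2101 * x ^ 5 / 15625 := by
  set c : ℝ := 1 - δ with hc
  have hc4 : (4 : ℝ) / 5 ≤ c := by rw [hc]; linarith
  have hc1 : c ≤ 1 := by rw [hc]; linarith
  have hc0 : 0 < c := by linarith
  have hA : c ^ 2 + (4 / 5) * c + 16 / 25 ≤ 61 / 25 := by nlinarith
  have hA0 : 0 ≤ c ^ 2 + (4 / 5) * c + 16 / 25 := by positivity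
  have hfac : (x / 5 - 61 * x ^ 3 / 375 + 2101 * x ^ 5 / 15625) -
      ((x - x ^ 3 / 3 + x ^ 5 / 5) -
        (c * x - (c * x) ^ 3 / 3 + (c * x) ^ 5 / 5)) =
      (c - 4 / 5) * x *
        (1 - x ^ 2 * (c ^ 2 + (4 / 5) * c + 16 / 25) / 3
           + x ^ 4 * (c ^ 4 + (4 / 5) * c ^ 3 + (16 / 25) * c ^ 2 + (64 / 125) * c + 256 / 625) / 5) := by
    ring
  have hxA : x ^ 2 * (c ^ 2 + (4 / 5) * c + 16 / 25) ≤ (1 / 2) * (61 / 25) :=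
    mul_le_mul hx2 hA hA0 (by norm_num)
  have hxB : 0 ≤ x ^ 4 * (c ^ 4 + (4 / 5) * c ^ 3 + (16 / 25) * c ^ 2 + (64 / 125) * c + 256 / 625) / 5 := by
    positivity
  have hinner : 0 ≤ 1 - x ^ 2 * (c ^ 2 + (4 / 5) * c + 16 / 25) / 3
      + x ^ 4 * (c ^ 4 + (4 / 5) * c ^ 3 + (16 / 25) * c ^ 2 + (64 / 125) * c + 256 / 625) / 5 := by
    linarith
  have hpos : 0 ≤ (c - 4 / 5) * x *
      (1 - x ^ 2 * (c ^ 2 + (4 / 5) * c + 16 / 25) / 3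
         + x ^ 4 * (c ^ 4 + (4 / 5) * c ^ 3 + (16 / 25) * c ^ 2 + (64 / 125) * c + 256 / 625) / 5) :=
    mul_nonneg (mul_nonneg (by linarith) hx.le) hinner
  linarith

lemma step2 {x : ℝ} (hx : 0 < x) (hx2 : x ^ 2 ≤ 1 / 2) :
    x / 5 - 61 * x ^ 3 / 375 + 2101 * x ^ 5 / 15625 ≤
      ((1 : ℝ) - 1 ^ 3 / 3 + 1 ^ 5 / 10 - 1 ^ 7 / 42 - 5 * 1 ^ 9 / 864)
      - ((71 / 100 : ℝ) - (71 / 100 : ℝ) ^ 3 / 3 + (71 / 100 : ℝ) ^ 5 / 10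
        - (71 / 100 : ℝ) ^ 7 / 42 - 5 * (71 / 100 : ℝ) ^ 9 / 864) := by
  have hx71 : x ≤ 7072 / 10000 := by nlinarith
  nlinarith [mul_nonneg (sub_nonneg.2 hx71) (sub_nonneg.2 hx2),
    mul_nonneg (mul_nonneg (sub_nonneg.2 hx71) (sub_nonneg.2 hx2)) (sub_nonneg.2 hx2),
    mul_nonneg (sub_nonneg.2 hx71) (sq_nonneg x), sq_nonneg (x ^ 2 - 1 / 2),
    mul_nonneg hx.le (sq_nonneg (x ^ 2 - 1 / 2)), hx.le, sq_nonneg x]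

lemma erf_key {δ x : ℝ} (hδ0 : 0 < δ) (hδ : δ ≤ 1 / 5) (hx : 0 < x) (hx2 : x ^ 2 ≤ 1 / 2) :
    erf x - erf ((1 - δ) * x) ≤ erf 1 - erf (71 / 100) := by
  rw [erf_sub ((1 - δ) * x) x, erf_sub (71 / 100) 1]
  have hcx : (1 - δ) * x ≤ x := by nlinarith
  have hcx0 : 0 ≤ (1 - δ) * x := by nlinarith
  have h1 : (∫ t in ((1 - δ) * x)..x, Real.exp (-t ^ 2)) ≤
      ∫ t in ((1 - δ) * x)..x, (1 - t ^ 2 + t ^ 4) :=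
    intervalIntegral.integral_mono_on hcx (gauss_integrable _ _)
      ((by continuity : Continuous fun t : ℝ => 1 - t ^ 2 + t ^ 4).intervalIntegrable _ _)
      (fun t _ => exp_upper)
  have h2 : (∫ t in (71 / 100 : ℝ)..1, (1 - t ^ 2 + t ^ 4 / 2 - t ^ 6 / 6 - 5 * t ^ 8 / 96)) ≤
      ∫ t in (71 / 100 : ℝ)..1, Real.exp (-t ^ 2) :=
    intervalIntegral.integral_mono_on (by norm_num)
      ((by continuity :
        Continuous fun t : ℝ => 1 - t ^ 2 + t ^ 4 / 2 - t ^ 6 / 6 - 5 * t ^ 8 / 96).intervalIntegrable _ _)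
      (gauss_integrable _ _)
      (fun t ht => exp_lower (le_trans (by norm_num) ht.1) ht.2)
  rw [poly1_integral] at h1
  rw [poly2_integral] at h2
  have h3 := (step1 hδ0 hδ hx hx2).trans (step2 hx hx2)
  have hc : (0:ℝ) ≤ 2 / Real.sqrt Real.pi := by positivity
  have hfinal := mul_le_mul_of_nonneg_left (h1.trans (h3.trans h2)) hc
  linarith

theorem stmt_13 (r R δ σ Fm : ℝ) (hδ0 : 0 < δ) (hδ : δ < 1 / 5)
    (hr : 0 < r) (hrR : r ≤ R) (hσ : σ ∈ Set.Icc r R)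
    (hFm : |(1 / 2) * (1 + erf (r / (σ * Real.sqrt 2))) - Fm| ≤
      (1 / 2) * (erf (r / (Real.sqrt 2 * R)) - erf ((1 - δ) * r / (Real.sqrt 2 * R)))) :
    (1 / 2) * (1 + erf (r / (σ * Real.sqrt 2))) ∈
        Set.Icc ((1 / 2) * (1 + erf ((1 - δ) * r / (Real.sqrt 2 * R))))
          ((1 / 2) * (1 + erf 1)) ∧
      Fm ∈ Set.Icc ((1 / 2) * (1 + erf ((1 - δ) * r / (Real.sqrt 2 * R))))
        ((1 / 2) * (1 + erf 1)) := by
  obtain ⟨hσr, hσR⟩ := hσ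
  have hσ0 : 0 < σ := lt_of_lt_of_le hr hσr
  have hR0 : 0 < R := lt_of_lt_of_le hr hrR
  have hs0 : (0:ℝ) < Real.sqrt 2 := Real.sqrt_pos.2 (by norm_num)
  have hs2 : Real.sqrt 2 ^ 2 = 2 := Real.sq_sqrt (by norm_num)
  have hrw : (1 - δ) * r / (Real.sqrt 2 * R) = (1 - δ) * (r / (Real.sqrt 2 * R)) :=
    mul_div_assoc _ _ _
  rw [hrw] at hFm ⊢
  set x := r / (Real.sqrt 2 * R) with hxd
  set y := r / (σ * Real.sqrt 2) with hyd
  have hx0 : 0 < x := by rw [hxd]; positivity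
  have hxy : x ≤ y := by
    rw [hxd, hyd, div_le_div_iff₀ (by positivity) (by positivity)]
    nlinarith [mul_le_mul_of_nonneg_left hσR (mul_pos hr hs0).le]
  have hy71 : y ≤ 71 / 100 := by
    rw [hyd, div_le_iff₀ (by positivity)]
    nlinarith [sq_nonneg (Real.sqrt 2 - 142 / 100), mul_pos hσ0 hs0,
      mul_le_mul_of_nonneg_right hσr hs0.le]
  have hx2 : x ^ 2 ≤ 1 / 2 := by
    rw [hxd, div_pow, mul_pow, hs2, div_le_iff₀ (by positivity)]
    nlinarith
  have hδ5 : δ ≤ 1 / 5 := hδ.le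
  have hcx : (1 - δ) * x ≤ x := by nlinarith
  have hm1 : erf ((1 - δ) * x) ≤ erf y := erf_mono (le_trans hcx hxy)
  have hm2 : erf y ≤ erf (71 / 100) := erf_mono hy71
  have hm3 : erf (71 / 100) ≤ erf 1 := erf_mono (by norm_num)
  have hm4 : erf x ≤ erf y := erf_mono hxy
  have hkey := erf_key hδ0 hδ5 hx0 hx2
  rw [abs_le] at hFm
  obtain ⟨hFm1, hFm2⟩ := hFm
  refine ⟨Set.mem_Icc.2 ⟨by linarith, by linarith⟩, Set.mem_Icc.2 ⟨by linarith, by linarith⟩⟩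
end
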